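/- arXiv:1701.05958 — 7 statements merged into one kernel-verified Lean document; each statement's English description precedes it below -/
import Mathlib

section
/- Let U ⊆ ℂ be open and let g : ℂ → ℂ be holomorphic on U with g'(ζ) ≠ 0 for all ζ ∈ U. Define K(ζ) = -(2|g'(ζ)|/(1+|g(ζ)|²))⁴ and N(ζ) = (1-|g(ζ)|²)/(1+|g(ζ)|²). Then the first Chern–Ricci function CR¹(ζ) = ln((-K(ζ))^{-1/4}(1+N(ζ))), viewed as a function of (u,v) with ζ = u+iv, is harmonic on U: ∂²CR¹/∂u² + ∂²CR¹/∂v² = 0 at every point of U. -/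
open Complex Filter Topology

private lemma analyticAt_deriv' {F : ℂ → ℂ} {z : ℂ} (h : AnalyticAt ℂ F z) :
    AnalyticAt ℂ (deriv F) z :=
  (AnalyticOnNhd.deriv_of_isOpen (fun _ hζ => hζ) (isOpen_analyticAt ℂ F)) z h

private lemma hasDerivAt_re_line {F : ℂ → ℂ} {F' : ℂ} {L : ℝ → ℂ} {L' : ℂ} {u : ℝ}
    (hL : HasDerivAt L L' u) (hF : HasDerivAt F F' (L u)) :
    HasDerivAt (fun u' => (F (L u')).re) (L' * F').re u := by
  have h1 : HasDerivAt (fun u' => F (L u')) (L' * F') u := by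
    have := (hF.hasFDerivAt.restrictScalars ℝ).comp_hasDerivAt u hL
    simpa [smul_eq_mul, mul_comm, Function.comp_def] using this
  simpa [Function.comp_def] using (Complex.reCLM.hasFDerivAt.comp_hasDerivAt u h1)

private lemma lineU (v : ℝ) (u : ℝ) :
    HasDerivAt (fun u' : ℝ => (u' : ℂ) + v * Complex.I) 1 u := by
  simpa using (Complex.ofRealCLM.hasDerivAt (x := u)).add_const (v * Complex.I)

private lemma lineV (u : ℝ) (v : ℝ) :
    HasDerivAt (fun v' : ℝ => (u : ℂ) + v' * Complex.I) Complex.I v := by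
  have h0 : HasDerivAt (fun v' : ℝ => (v' : ℂ)) 1 v := by
    simpa using (hasDerivAt_id v).ofReal_comp
  have : HasDerivAt (fun v' : ℝ => (v' : ℂ) * Complex.I) (1 * Complex.I) v :=
    h0.mul_const Complex.I
  simpa using this.const_add (u : ℂ)

private lemma iteratedDeriv_two (f : ℝ → ℝ) (x : ℝ) :
    iteratedDeriv 2 f x = deriv (deriv f) x := by
  rw [show (2 : ℕ) = 1 + 1 from rfl, iteratedDeriv_succ, iteratedDeriv_one]

private lemma laplacian_re_zero (F : ℂ → ℂ) (u v : ℝ)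
    (hF : ∀ᶠ ζ in 𝓝 ((u : ℂ) + v * Complex.I), DifferentiableAt ℂ F ζ) :
    iteratedDeriv 2 (fun u' : ℝ => (F (u' + v * Complex.I)).re) u
      + iteratedDeriv 2 (fun v' : ℝ => (F (u + v' * Complex.I)).re) v = 0 := by
  set ζ₀ : ℂ := (u : ℂ) + v * Complex.I with hζ₀
  have hA : ∀ᶠ ζ in 𝓝 ζ₀, AnalyticAt ℂ F ζ :=
    hF.eventually_nhds.mono fun ζ h => Complex.analyticAt_iff_eventually_differentiableAt.mpr h
  have hA0 : AnalyticAt ℂ F ζ₀ := hA.self_of_nhds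
  have hD' : ∀ᶠ ζ in 𝓝 ζ₀, AnalyticAt ℂ (deriv F) ζ := hA.mono fun ζ h => analyticAt_deriv' h
  have hcu : Filter.Tendsto (fun u' : ℝ => (u' : ℂ) + v * Complex.I) (𝓝 u) (𝓝 ζ₀) := by
    exact ((Complex.continuous_ofReal.add continuous_const).tendsto u)
  have hcv : Filter.Tendsto (fun v' : ℝ => (u : ℂ) + v' * Complex.I) (𝓝 v) (𝓝 ζ₀) := by
    exact ((continuous_const.add (Complex.continuous_ofReal.mul continuous_const)).tendsto v)
  set F'' : ℂ := deriv (deriv F) ζ₀ with hF''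
  -- u-direction
  have h1 : deriv (fun u' : ℝ => (F (u' + v * Complex.I)).re)
      =ᶠ[𝓝 u] fun u' : ℝ => ((deriv F) (u' + v * Complex.I)).re := by
    filter_upwards [hcu.eventually hA] with u' hA'
    simpa using (hasDerivAt_re_line (lineU v u') hA'.differentiableAt.hasDerivAt).deriv
  have h2 : iteratedDeriv 2 (fun u' : ℝ => (F (u' + v * Complex.I)).re) u = F''.re := by
    rw [iteratedDeriv_two, h1.deriv_eq]
    simpa using
      (hasDerivAt_re_line (lineU v u) (hD'.self_of_nhds.differentiableAt.hasDerivAt)).deriv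
  -- v-direction
  have h3 : deriv (fun v' : ℝ => (F (u + v' * Complex.I)).re)
      =ᶠ[𝓝 v] fun v' : ℝ => ((fun ζ => Complex.I * deriv F ζ) (u + v' * Complex.I)).re := by
    filter_upwards [hcv.eventually hA] with v' hA'
    simpa using (hasDerivAt_re_line (lineV u v') hA'.differentiableAt.hasDerivAt).deriv
  have h4 : iteratedDeriv 2 (fun v' : ℝ => (F (u + v' * Complex.I)).re) v
      = (Complex.I * (Complex.I * F'')).re := by
    rw [iteratedDeriv_two, h3.deriv_eq]
    have hG : HasDerivAt (fun ζ => Complex.I * deriv F ζ) (Complex.I * F'') ζ₀ :=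
      (hD'.self_of_nhds.differentiableAt.hasDerivAt).const_mul Complex.I
    simpa using (hasDerivAt_re_line (lineV u v) hG).deriv
  rw [h2, h4]
  have : Complex.I * (Complex.I * F'') = -F'' := by
    rw [← mul_assoc, Complex.I_mul_I]; ring
  rw [this]
  simp

private lemma iteratedDeriv_two_congr {f h : ℝ → ℝ} {x : ℝ} (he : f =ᶠ[𝓝 x] h) :
    iteratedDeriv 2 f x = iteratedDeriv 2 h x := by
  rw [iteratedDeriv_two, iteratedDeriv_two]
  exact he.deriv.deriv_eq

/-- The first Chern–Ricci function `CR¹ = ln((-K)^(-1/4)·(1+N))`, viewed as a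
function of `(u,v)` with `ζ = u + iv`, is harmonic on `U`: the flat Laplacian
`∂²CR¹/∂u² + ∂²CR¹/∂v²` vanishes at every point of `U`. -/
theorem first_chern_ricci_harmonic
    (U : Set ℂ) (hU : IsOpen U) (g g' : ℂ → ℂ)
    (hg : ∀ ζ ∈ U, HasDerivAt g (g' ζ) ζ)
    (hg' : ∀ ζ ∈ U, g' ζ ≠ 0)
    (K N : ℂ → ℝ)
    (hK : ∀ ζ, K ζ = -(2 * ‖g' ζ‖ / (1 + ‖g ζ‖ ^ 2)) ^ 4)
    (hN : ∀ ζ, N ζ = (1 - ‖g ζ‖ ^ 2) / (1 + ‖g ζ‖ ^ 2))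
    (CR : ℝ → ℝ → ℝ)
    (hCR : ∀ u v : ℝ, CR u v =
      Real.log ((-K (u + v * Complex.I)) ^ (-(1 / 4) : ℝ) * (1 + N (u + v * Complex.I)))) :
    ∀ u v : ℝ, (u + v * Complex.I : ℂ) ∈ U →
      iteratedDeriv 2 (fun u' => CR u' v) u + iteratedDeriv 2 (fun v' => CR u v') v = 0 := by
  intro u v hζ₀
  set ζ₀ : ℂ := (u : ℂ) + v * Complex.I with hζ₀def
  -- g is analytic on U, and deriv g = g' on U
  have hgan : ∀ ζ ∈ U, AnalyticAt ℂ g ζ := by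
    intro ζ hζ
    exact DifferentiableOn.analyticAt
      (fun x hx => (hg x hx).differentiableAt.differentiableWithinAt) (hU.mem_nhds hζ)
  have hderiv_eq : ∀ ζ ∈ U, deriv g ζ = g' ζ := fun ζ hζ => (hg ζ hζ).deriv
  -- choose unimodular c with c * g' ζ₀ in the slit plane
  obtain ⟨c, hc1, hcslit⟩ : ∃ c : ℂ, ‖c‖ = 1 ∧ c * g' ζ₀ ∈ Complex.slitPlane := by
    by_cases h : g' ζ₀ ∈ Complex.slitPlane
    · exact ⟨1, by simp, by simpa using h⟩
    · refine ⟨-1, by simp, ?_⟩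
      rw [Complex.mem_slitPlane_iff] at h ⊢
      push_neg at h
      have hre : (g' ζ₀).re ≠ 0 := by
        intro h0
        exact hg' ζ₀ hζ₀ (Complex.ext h0 h.2)
      left
      simp only [neg_one_mul, Complex.neg_re]
      cases lt_or_gt_of_ne hre with
      | inl hlt => linarith
      | inr hgt => exact absurd h.1 (not_le.mpr hgt)
  set F : ℂ → ℂ := fun ζ => -Complex.log (c * deriv g ζ) with hFdef
  -- CR agrees with (F ·).re on U
  have key : ∀ ζ ∈ U, Real.log ((-K ζ) ^ (-(1 / 4) : ℝ) * (1 + N ζ)) = (F ζ).re := by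
    intro ζ hζ
    have hb : 0 < ‖g' ζ‖ := norm_pos_iff.mpr (hg' ζ hζ)
    set a : ℝ := ‖g ζ‖ with hadef
    set b : ℝ := ‖g' ζ‖ with hbdef
    have ha2 : 0 < 1 + a ^ 2 := by positivity
    have hy : 0 < 2 * b / (1 + a ^ 2) := by positivity
    have e2 : ((2 * b / (1 + a ^ 2)) ^ 4 : ℝ) ^ (-(1 / 4) : ℝ) = (2 * b / (1 + a ^ 2))⁻¹ := by
      rw [← Real.rpow_natCast (2 * b / (1 + a ^ 2)) 4, ← Real.rpow_mul hy.le,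
        ← Real.rpow_neg_one]
      norm_num
    have e3 : (1 : ℝ) + (1 - a ^ 2) / (1 + a ^ 2) = 2 / (1 + a ^ 2) := by
      field_simp
      ring
    have e4 : (2 * b / (1 + a ^ 2))⁻¹ * (2 / (1 + a ^ 2)) = b⁻¹ := by
      field_simp
    have habs : ‖c * deriv g ζ‖ = b := by
      rw [norm_mul, hc1, one_mul, hderiv_eq ζ hζ]
    rw [hK, hN, neg_neg]
    rw [e2, e3, e4]
    rw [hFdef]
    simp only [Complex.neg_re, Complex.log_re, habs, Real.log_inv]
  -- F is differentiable near ζ₀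
  have hcontd : ContinuousAt (fun ζ => c * deriv g ζ) ζ₀ :=
    (continuousAt_const.mul (analyticAt_deriv' (hgan ζ₀ hζ₀)).continuousAt)
  have hslit0 : c * deriv g ζ₀ ∈ Complex.slitPlane := by
    rwa [hderiv_eq ζ₀ hζ₀]
  have hev : ∀ᶠ ζ in 𝓝 ζ₀, c * deriv g ζ ∈ Complex.slitPlane :=
    hcontd.eventually_mem (Complex.isOpen_slitPlane.mem_nhds hslit0)
  have hFd : ∀ᶠ ζ in 𝓝 ζ₀, DifferentiableAt ℂ F ζ := by
    filter_upwards [hev, hU.eventually_mem hζ₀] with ζ hsl hζU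
    have hd : DifferentiableAt ℂ (fun ζ => c * deriv g ζ) ζ :=
      (differentiableAt_const c).mul (analyticAt_deriv' (hgan ζ hζU)).differentiableAt
    exact ((Complex.differentiableAt_log hsl).comp ζ hd).neg
  -- rewrite the two iterated derivatives
  have hUev : ∀ᶠ ζ in 𝓝 ζ₀, ζ ∈ U := hU.eventually_mem hζ₀
  have hu_eq : (fun u' => CR u' v) =ᶠ[𝓝 u]
      fun u' : ℝ => (F (u' + v * Complex.I)).re := by
    have hcu : Filter.Tendsto (fun u' : ℝ => (u' : ℂ) + v * Complex.I) (𝓝 u) (𝓝 ζ₀) :=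
      ((Complex.continuous_ofReal.add continuous_const).tendsto u)
    filter_upwards [hcu.eventually hUev] with u' hmem
    rw [hCR, key _ hmem]
  have hv_eq : (fun v' => CR u v') =ᶠ[𝓝 v]
      fun v' : ℝ => (F (u + v' * Complex.I)).re := by
    have hcv : Filter.Tendsto (fun v' : ℝ => (u : ℂ) + v' * Complex.I) (𝓝 v) (𝓝 ζ₀) :=
      ((continuous_const.add (Complex.continuous_ofReal.mul continuous_const)).tendsto v)
    filter_upwards [hcv.eventually hUev] with v' hmem
    rw [hCR, key _ hmem]
  rw [iteratedDeriv_two_congr hu_eq, iteratedDeriv_two_congr hv_eq]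
  exact laplacian_re_zero F u v hFd
end

section
/- Let U ⊆ ℂ be open and let g : ℂ → ℂ be holomorphic on U with g(ζ) ≠ 0 and g'(ζ) ≠ 0 for all ζ ∈ U. Define K(ζ) = -(2|g'(ζ)|/(1+|g(ζ)|²))⁴ and N(ζ) = (1-|g(ζ)|²)/(1+|g(ζ)|²). Then the second Chern–Ricci function CR²(ζ) = ln((-K(ζ))^{-1/2}(1-N(ζ)²)), viewed as a function of (u,v) with ζ = u+iv, is harmonic on U: ∂²CR²/∂u² + ∂²CR²/∂v² = 0 at every point of U. -/
open Complex

lemma hasDerivAt_re_comp {f : ℝ → ℂ} {c : ℂ} {x : ℝ} (h : HasDerivAt f c x) :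
    HasDerivAt (fun t => (f t).re) c.re x := by
  have := (Complex.reCLM.hasFDerivAt.comp x h.hasFDerivAt).hasDerivAt
  simp at this
  exact this

lemma hasDerivAt_horiz {F : ℂ → ℂ} {c : ℂ} {u v : ℝ}
    (h : HasDerivAt F c (u + v * I)) :
    HasDerivAt (fun t : ℝ => (F (t + v * I)).re) c.re u := by
  have h1 : HasDerivAt (fun w : ℂ => w + v * I) 1 (u : ℂ) :=
    (hasDerivAt_id _).add_const _
  have h2 := (h.comp (u : ℂ) h1).comp_ofReal
  simpa using hasDerivAt_re_comp h2

lemma hasDerivAt_vert {F : ℂ → ℂ} {c : ℂ} {u v : ℝ}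
    (h : HasDerivAt F c (u + v * I)) :
    HasDerivAt (fun t : ℝ => (F (u + t * I)).re) (c * I).re v := by
  have h1 : HasDerivAt (fun w : ℂ => (u : ℂ) + w * I) I (v : ℂ) := by
    simpa using ((hasDerivAt_id (v : ℂ)).mul_const I).const_add (u : ℂ)
  have h2 := (h.comp (v : ℂ) h1).comp_ofReal
  exact hasDerivAt_re_comp h2

lemma mem_nhds_horiz {V : Set ℂ} (hV : IsOpen V) {u v : ℝ} (hm : (u + v * I : ℂ) ∈ V) :
    ∀ᶠ t : ℝ in nhds u, ((t : ℂ) + v * I) ∈ V := by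
  have hc : Continuous fun t : ℝ => (t + v * I : ℂ) := by continuity
  exact hc.continuousAt.eventually_mem (hV.mem_nhds hm)

lemma mem_nhds_vert {V : Set ℂ} (hV : IsOpen V) {u v : ℝ} (hm : (u + v * I : ℂ) ∈ V) :
    ∀ᶠ t : ℝ in nhds v, ((u : ℂ) + t * I) ∈ V := by
  have hc : Continuous fun t : ℝ => (u + t * I : ℂ) := by continuity
  exact hc.continuousAt.eventually_mem (hV.mem_nhds hm)

lemma harmonic_re {F : ℂ → ℂ} {V : Set ℂ} (hV : IsOpen V)
    (hF : DifferentiableOn ℂ F V) {u v : ℝ} (hm : (u + v * I : ℂ) ∈ V) :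
    iteratedDeriv 2 (fun t : ℝ => (F (t + v * I)).re) u
      + iteratedDeriv 2 (fun t : ℝ => (F (u + t * I)).re) v = 0 := by
  have hFa : AnalyticOnNhd ℂ F V := hF.analyticOnNhd hV
  have hG : DifferentiableOn ℂ (deriv F) V := (hFa.deriv).differentiableOn
  have hFat : ∀ ζ ∈ V, HasDerivAt F (deriv F ζ) ζ := fun ζ hζ =>
    (hF.differentiableAt (hV.mem_nhds hζ)).hasDerivAt
  have hGat : ∀ ζ ∈ V, HasDerivAt (deriv F) (deriv (deriv F) ζ) ζ := fun ζ hζ =>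
    (hG.differentiableAt (hV.mem_nhds hζ)).hasDerivAt
  -- horizontal second derivative
  have e1 : deriv (fun t : ℝ => (F (t + v * I)).re) =ᶠ[nhds u]
      fun t : ℝ => (deriv F (t + v * I)).re := by
    filter_upwards [mem_nhds_horiz hV hm] with t ht
    exact (hasDerivAt_horiz (hFat _ ht)).deriv
  have d1 : iteratedDeriv 2 (fun t : ℝ => (F (t + v * I)).re) u
      = (deriv (deriv F) (u + v * I)).re := by
    rw [iteratedDeriv_succ, iteratedDeriv_one, e1.deriv_eq]
    exact (hasDerivAt_horiz (hGat _ hm)).deriv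
  -- vertical second derivative
  have e2 : deriv (fun t : ℝ => (F (u + t * I)).re) =ᶠ[nhds v]
      fun t : ℝ => (deriv F (u + t * I) * I).re := by
    filter_upwards [mem_nhds_vert hV hm] with t ht
    exact (hasDerivAt_vert (hFat _ ht)).deriv
  have d2 : iteratedDeriv 2 (fun t : ℝ => (F (u + t * I)).re) v
      = (deriv (deriv F) (u + v * I) * I * I).re := by
    rw [iteratedDeriv_succ, iteratedDeriv_one, e2.deriv_eq]
    have := hasDerivAt_vert (F := fun ζ => deriv F ζ * I)
      (c := deriv (deriv F) (u + v * I) * I) (u := u) (v := v)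
      (((hGat _ hm)).mul_const I)
    exact this.deriv
  rw [d1, d2]
  have : deriv (deriv F) (u + v * I) * I * I = -(deriv (deriv F) (u + v * I)) := by
    rw [mul_assoc, Complex.I_mul_I]; ring
  rw [this]; simp

lemma CR_algebra (a b : ℝ) (ha : 0 < a) (hb : 0 < b) :
    Real.log ((-(-(2 * b / (1 + a ^ 2)) ^ 4)) ^ (-(1 / 2) : ℝ)
      * (1 - ((1 - a ^ 2) / (1 + a ^ 2)) ^ 2)) = 2 * Real.log a - 2 * Real.log b := by
  have hd : (0:ℝ) < 1 + a ^ 2 := by positivity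
  have hx : (0:ℝ) < 2 * b / (1 + a ^ 2) := by positivity
  have h1 : (-(-(2 * b / (1 + a ^ 2)) ^ 4) : ℝ) ^ (-(1 / 2) : ℝ)
      = ((2 * b / (1 + a ^ 2)) ^ 2)⁻¹ := by
    rw [neg_neg, ← Real.rpow_natCast (2 * b / (1 + a ^ 2)) 4,
      ← Real.rpow_natCast (2 * b / (1 + a ^ 2)) 2, ← Real.rpow_neg hx.le,
      ← Real.rpow_mul hx.le]
    norm_num
  have h2 : (1 : ℝ) - ((1 - a ^ 2) / (1 + a ^ 2)) ^ 2 = 4 * a ^ 2 / (1 + a ^ 2) ^ 2 := by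
    field_simp; ring
  have h3 : ((2 * b / (1 + a ^ 2)) ^ 2)⁻¹ * (4 * a ^ 2 / (1 + a ^ 2) ^ 2)
      = a ^ 2 / b ^ 2 := by
    field_simp; ring
  rw [h1, h2, h3, Real.log_div (by positivity) (by positivity), Real.log_pow, Real.log_pow]
  push_cast; ring

lemma itd2_congr {f h : ℝ → ℝ} {x : ℝ} (he : f =ᶠ[nhds x] h) :
    iteratedDeriv 2 f x = iteratedDeriv 2 h x := by
  rw [iteratedDeriv_succ, iteratedDeriv_one, iteratedDeriv_succ, iteratedDeriv_one]
  exact (he.deriv).deriv_eq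


/-- The second Chern–Ricci function `CR² = ln((-K)^(-1/2)·(1-N²))`, viewed as a
function of `(u,v)` with `ζ = u + iv`, is harmonic on `U`: the flat Laplacian
`∂²CR²/∂u² + ∂²CR²/∂v²` vanishes at every point of `U`. -/
theorem second_chern_ricci_harmonic
    (U : Set ℂ) (hU : IsOpen U) (g g' : ℂ → ℂ)
    (hg : ∀ ζ ∈ U, HasDerivAt g (g' ζ) ζ)
    (hg0 : ∀ ζ ∈ U, g ζ ≠ 0)
    (hg' : ∀ ζ ∈ U, g' ζ ≠ 0)
    (K N : ℂ → ℝ)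
    (hK : ∀ ζ, K ζ = -(2 * ‖g' ζ‖ / (1 + ‖g ζ‖ ^ 2)) ^ 4)
    (hN : ∀ ζ, N ζ = (1 - ‖g ζ‖ ^ 2) / (1 + ‖g ζ‖ ^ 2))
    (CR : ℝ → ℝ → ℝ)
    (hCR : ∀ u v : ℝ, CR u v =
      Real.log ((-K (u + v * Complex.I)) ^ (-(1 / 2) : ℝ) * (1 - N (u + v * Complex.I) ^ 2))) :
    ∀ u v : ℝ, (u + v * Complex.I : ℂ) ∈ U →
      iteratedDeriv 2 (fun u' => CR u' v) u + iteratedDeriv 2 (fun v' => CR u v') v = 0 := by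
  intro u v hm
  set ζ₀ : ℂ := (u : ℂ) + v * I with hζ₀
  have hderiv_eq : ∀ ζ ∈ U, deriv g ζ = g' ζ := fun ζ hζ => (hg ζ hζ).deriv
  have hgdiff : DifferentiableOn ℂ g U := fun ζ hζ =>
    (hg ζ hζ).differentiableAt.differentiableWithinAt
  have hGdiff : DifferentiableOn ℂ (deriv g) U :=
    ((hgdiff.analyticOnNhd hU).deriv).differentiableOn
  set c := g ζ₀ with hcdef
  set d := deriv g ζ₀ with hddef
  have hc : c ≠ 0 := hg0 _ hm
  have hd : d ≠ 0 := by rw [hddef, hderiv_eq _ hm]; exact hg' _ hm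
  -- the open set where logs are defined
  set V : Set ℂ :=
    (U ∩ (fun ζ => (g ζ / c).re) ⁻¹' Set.Ioi 0) ∩ (fun ζ => (deriv g ζ / d).re) ⁻¹' Set.Ioi 0
    with hVdef
  have hco1 : ContinuousOn (fun ζ => (g ζ / c).re) U :=
    Complex.continuous_re.comp_continuousOn (hgdiff.continuousOn.div_const c)
  have hco2 : ContinuousOn (fun ζ => (deriv g ζ / d).re) U :=
    Complex.continuous_re.comp_continuousOn (hGdiff.continuousOn.div_const d)
  have hV1 : IsOpen (U ∩ (fun ζ => (g ζ / c).re) ⁻¹' Set.Ioi 0) :=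
    hco1.isOpen_inter_preimage hU isOpen_Ioi
  have hVopen : IsOpen V :=
    (hco2.mono (fun ζ hζ => hζ.1)).isOpen_inter_preimage hV1 isOpen_Ioi
  have hVU : V ⊆ U := fun ζ hζ => hζ.1.1
  have hmV : ζ₀ ∈ V := by
    refine ⟨⟨hm, ?_⟩, ?_⟩ <;>
      simp [Set.mem_preimage, ← hcdef, ← hddef, div_self hc, div_self hd]
  -- the holomorphic potential
  set F : ℂ → ℂ := fun ζ => 2 * Complex.log (g ζ / c) - 2 * Complex.log (deriv g ζ / d)
      + ((2 * Real.log ‖c‖ - 2 * Real.log ‖d‖ : ℝ) : ℂ) with hFdef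
  have hFdiff : DifferentiableOn ℂ F V := by
    intro ζ hζ
    obtain ⟨⟨hζU, h1⟩, h2⟩ := hζ
    have d1 : DifferentiableAt ℂ (fun ζ => g ζ / c) ζ :=
      (hgdiff.differentiableAt (hU.mem_nhds hζU)).div_const c
    have d2 : DifferentiableAt ℂ (fun ζ => deriv g ζ / d) ζ :=
      (hGdiff.differentiableAt (hU.mem_nhds hζU)).div_const d
    have l1 : DifferentiableAt ℂ (fun ζ => Complex.log (g ζ / c)) ζ :=
      d1.clog (Or.inl h1)
    have l2 : DifferentiableAt ℂ (fun ζ => Complex.log (deriv g ζ / d)) ζ :=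
      d2.clog (Or.inl h2)
    exact (((l1.const_mul 2).sub (l2.const_mul 2)).add_const _).differentiableWithinAt
  -- F.re equals the CR integrand on V
  have key : ∀ ζ ∈ V, (F ζ).re
      = Real.log ((-K ζ) ^ (-(1 / 2) : ℝ) * (1 - N ζ ^ 2)) := by
    intro ζ hζ
    have hζU : ζ ∈ U := hVU hζ
    have hga : ‖g ζ‖ ≠ 0 := norm_ne_zero_iff.mpr (hg0 _ hζU)
    have hg'a : ‖g' ζ‖ ≠ 0 := norm_ne_zero_iff.mpr (hg' _ hζU)
    have hca : ‖c‖ ≠ 0 := norm_ne_zero_iff.mpr hc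
    have hda : ‖d‖ ≠ 0 := norm_ne_zero_iff.mpr hd
    have hre : (F ζ).re = 2 * Real.log ‖g ζ‖
        - 2 * Real.log ‖g' ζ‖ := by
      have : deriv g ζ = g' ζ := hderiv_eq _ hζU
      simp only [hFdef, Complex.add_re, Complex.sub_re, Complex.ofReal_re, this]
      rw [show ((2 : ℂ) * Complex.log (g ζ / c)).re = 2 * (Complex.log (g ζ / c)).re by
            simp [Complex.mul_re],
          show ((2 : ℂ) * Complex.log (g' ζ / d)).re = 2 * (Complex.log (g' ζ / d)).re by
            simp [Complex.mul_re],
          Complex.log_re, Complex.log_re, norm_div, norm_div,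
          Real.log_div hga hca, Real.log_div hg'a hda]
      ring
    rw [hre, hK, hN]
    exact (CR_algebra ‖g ζ‖ ‖g' ζ‖
      (lt_of_le_of_ne (norm_nonneg _) (Ne.symm hga))
      (lt_of_le_of_ne (norm_nonneg _) (Ne.symm hg'a))).symm
  -- eventual equality in each variable
  have e1 : (fun u' => CR u' v) =ᶠ[nhds u] fun t : ℝ => (F (t + v * I)).re := by
    filter_upwards [mem_nhds_horiz hVopen hmV] with t ht
    rw [hCR t v, key _ ht]
  have e2 : (fun v' => CR u v') =ᶠ[nhds v] fun t : ℝ => (F (u + t * I)).re := by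
    filter_upwards [mem_nhds_vert hVopen hmV] with t ht
    rw [hCR u t, key _ ht]
  rw [itd2_congr e1, itd2_congr e2]
  exact harmonic_re hVopen hFdiff hmV
end

section
/- Let U ⊆ ℂ be a connected open set and let g : ℂ → ℂ be holomorphic on U with g'(ζ) ≠ 0 for all ζ ∈ U. Define K(ζ) = -(2|g'(ζ)|/(1+|g(ζ)|²))⁴ and N(ζ) = (1-|g(ζ)|²)/(1+|g(ζ)|²). If the first Chern–Ricci function CR¹(ζ) = ln((-K(ζ))^{-1/4}(1+N(ζ))) is constant on U, then there exist constants α ∈ ℂ∖{0} and β ∈ ℂ such that g(ζ) = αζ + β for all ζ ∈ U; that is, the corresponding minimal surface is Enneper's surface (up to isometries and homotheties of ℝ³). -/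
/-- **Uniqueness of Enneper's surface.** If the first Chern–Ricci function
`CR¹ = ln((-K)^(-1/4)·(1+N))` is constant on a connected open set `U`, then the Gauss map is
affine, `g(ζ) = αζ + β` with `α ≠ 0`; that is, the corresponding minimal surface is Enneper's
surface up to isometries and homotheties of `ℝ³`. -/
theorem enneper_unique_of_constant_first_chern_ricci
    (U : Set ℂ) (hU : IsOpen U) (hUconn : IsConnected U) (g g' : ℂ → ℂ)
    (hg : ∀ ζ ∈ U, HasDerivAt g (g' ζ) ζ)
    (hg' : ∀ ζ ∈ U, g' ζ ≠ 0)
    (K N : ℂ → ℝ)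
    (hK : ∀ ζ, K ζ = -(2 * ‖g' ζ‖ / (1 + ‖g ζ‖ ^ 2)) ^ 4)
    (hN : ∀ ζ, N ζ = (1 - ‖g ζ‖ ^ 2) / (1 + ‖g ζ‖ ^ 2))
    (C : ℝ)
    (hconst : ∀ ζ ∈ U, Real.log ((-K ζ) ^ (-(1 / 4) : ℝ) * (1 + N ζ)) = C) :
    ∃ α β : ℂ, α ≠ 0 ∧ ∀ ζ ∈ U, g ζ = α * ζ + β := by
  -- Step 1: the constancy of CR¹ forces |g'| to be constant equal to exp(-C) on U.
  have habs : ∀ ζ ∈ U, ‖g' ζ‖ = Real.exp (-C) := by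
    intro ζ hζ
    set a := ‖g' ζ‖ with ha
    set b := ‖g ζ‖ with hb
    have ha0 : 0 < a := by
      have := hg' ζ hζ
      simpa [ha] using (norm_pos_iff.mpr this)
    have hd0 : 0 < 1 + b ^ 2 := by positivity
    have hx0 : 0 < 2 * a / (1 + b ^ 2) := by positivity
    set x := 2 * a / (1 + b ^ 2) with hx
    have hKsimp : -K ζ = x ^ (4 : ℕ) := by
      rw [hK ζ]; push_cast; ring
    have hrpow : (-K ζ) ^ (-(1 / 4) : ℝ) = x⁻¹ := by
      rw [hKsimp, ← Real.rpow_natCast x 4, ← Real.rpow_mul hx0.le]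
      norm_num
      exact Real.rpow_neg_one x
    have hNsimp : 1 + N ζ = 2 / (1 + b ^ 2) := by
      rw [hN ζ]; field_simp; ring
    have hprod : (-K ζ) ^ (-(1 / 4) : ℝ) * (1 + N ζ) = a⁻¹ := by
      rw [hrpow, hNsimp, hx]
      field_simp
    have hlog : Real.log (a⁻¹) = C := by rw [← hprod]; exact hconst ζ hζ
    have : Real.log a = -C := by
      rw [Real.log_inv] at hlog; linarith
    rw [← this, Real.exp_log ha0]
  -- g is analytic on U, hence so is deriv g, and g' = deriv g on U.
  have hgdiff : DifferentiableOn ℂ g U := fun ζ hζ =>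
    (hg ζ hζ).differentiableAt.differentiableWithinAt
  have hgana : AnalyticOnNhd ℂ g U := hgdiff.analyticOnNhd hU
  have hEq : Set.EqOn g' (deriv g) U := fun ζ hζ => ((hg ζ hζ).deriv).symm
  have hg'diff : DifferentiableOn ℂ g' U :=
    (hgana.deriv.differentiableOn).congr hEq
  -- Maximum modulus: |g'| constant ⇒ g' constant.
  obtain ⟨z₀, hz₀⟩ := hUconn.nonempty
  have hmax : IsMaxOn (norm ∘ g') U z₀ := by
    intro x hx
    simp only [Function.comp_apply, Set.mem_setOf_eq]
    have h1 : ‖g' x‖ = Real.exp (-C) := habs x hx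
    have h2 : ‖g' z₀‖ = Real.exp (-C) := habs z₀ hz₀
    rw [h1, h2]
  have hconstg' : Set.EqOn g' (Function.const ℂ (g' z₀)) U :=
    Complex.eqOn_of_isPreconnected_of_isMaxOn_norm hUconn.isPreconnected hU hg'diff hz₀ hmax
  set α := g' z₀ with hα
  have hαne : α ≠ 0 := hg' z₀ hz₀
  set β := g z₀ - α * z₀ with hβ
  refine ⟨α, β, hαne, ?_⟩
  -- g and αζ+β agree near z₀ (zero derivative of the difference on a ball), hence on U.
  obtain ⟨r, hr, hball⟩ := Metric.isOpen_iff.1 hU z₀ hz₀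
  have hloc : ∀ y ∈ Metric.ball z₀ r, g y = α * y + β := by
    intro y hy
    set h : ℂ → ℂ := fun ζ => g ζ - (α * ζ + β) with hh
    have hder : ∀ x ∈ Metric.ball z₀ r,
        HasFDerivWithinAt h ((1 : ℂ →L[ℂ] ℂ).smulRight (0 : ℂ)) (Metric.ball z₀ r) x := by
      intro x hx
      have h1 : HasDerivAt h (g' x - α) x := by
        have := (hg x (hball hx)).sub (((hasDerivAt_id x).const_mul α).add_const β)
        rw [mul_one] at this; exact this
      have h2 : g' x = α := hconstg' (hball hx)
      have : HasDerivAt h (0 : ℂ) x := by rw [h2, sub_self] at h1; exact h1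
      exact this.hasFDerivAt.hasFDerivWithinAt
    have hbound : ∀ x ∈ Metric.ball z₀ r,
        ‖(1 : ℂ →L[ℂ] ℂ).smulRight (0 : ℂ)‖ ≤ (0 : ℝ) := by
      intro x _; simp
    have := (convex_ball z₀ r).norm_image_sub_le_of_norm_hasFDerivWithin_le hder hbound
      (Metric.mem_ball_self hr) hy
    have hzero : h y = h z₀ := by
      have h0 : ‖h y - h z₀‖ ≤ 0 := by simpa using this
      exact sub_eq_zero.1 (norm_le_zero_iff.1 h0)
    have hz₀val : h z₀ = 0 := by simp [hh, hβ]
    have : h y = 0 := by rw [hzero, hz₀val]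
    simpa [hh, sub_eq_zero] using this
  -- identity theorem
  have hana2 : AnalyticOnNhd ℂ (fun ζ => α * ζ + β) U :=
    ((analyticOnNhd_const.mul analyticOnNhd_id).add analyticOnNhd_const)
  have hev : g =ᶠ[nhds z₀] (fun ζ => α * ζ + β) :=
    Filter.eventuallyEq_of_mem (Metric.ball_mem_nhds z₀ hr) hloc
  exact fun ζ hζ =>
    hgana.eqOn_of_preconnected_of_eventuallyEq hana2 hUconn.isPreconnected hz₀ hev hζ
end

section
/- Let U ⊆ ℂ be a connected open set and let g : ℂ → ℂ be holomorphic on U with g(ζ) ≠ 0 and g'(ζ) ≠ 0 for all ζ ∈ U. Define K(ζ) = -(2|g'(ζ)|/(1+|g(ζ)|²))⁴ and N(ζ) = (1-|g(ζ)|²)/(1+|g(ζ)|²). If the second Chern–Ricci function CR²(ζ) = ln((-K(ζ))^{-1/2}(1-N(ζ)²)) is constant on U, then there exist constants α ∈ ℂ∖{0} and c ∈ ℂ∖{0} such that g(ζ) = c·exp(αζ) for all ζ ∈ U. -/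
/-- A function with vanishing derivative on an open preconnected set is constant there. -/
lemma constOn_of_hasDerivAt_zero' {U : Set ℂ} (hU : IsOpen U) (hUc : IsPreconnected U)
    {f : ℂ → ℂ} (hf : ∀ ζ ∈ U, HasDerivAt f 0 ζ) {ζ₀ : ℂ} (hζ₀ : ζ₀ ∈ U) :
    ∀ ζ ∈ U, f ζ = f ζ₀ := by
  have hdiff : DifferentiableOn ℂ f U := fun ζ hζ =>
    (hf ζ hζ).differentiableAt.differentiableWithinAt
  have han : AnalyticOnNhd ℂ f U := hdiff.analyticOnNhd hU
  have hev : f =ᶠ[nhds ζ₀] fun _ => f ζ₀ := by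
    obtain ⟨ε, hε, hball⟩ := Metric.isOpen_iff.mp hU ζ₀ hζ₀
    have hconv : Convex ℝ (Metric.ball ζ₀ ε) := convex_ball _ _
    have hconst : ∀ ζ ∈ Metric.ball ζ₀ ε, f ζ = f ζ₀ := by
      intro ζ hζ
      refine hconv.is_const_of_fderivWithin_eq_zero (hdiff.mono hball) ?_ hζ
        (Metric.mem_ball_self hε)
      intro z hz
      rw [fderivWithin_of_isOpen Metric.isOpen_ball hz,
        (hf z (hball hz)).hasFDerivAt.fderiv]
      ext
      simp
    filter_upwards [Metric.ball_mem_nhds ζ₀ hε] with z hz using hconst z hz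
  exact fun ζ hζ =>
    han.eqOn_of_preconnected_of_eventuallyEq analyticOnNhd_const hUc hζ₀ hev hζ

/-- **Classification for the second Chern–Ricci function.** If the second
Chern–Ricci function `CR² = ln((-K)^(-1/2)·(1-N²))` is constant on a connected open set `U`,
then the Gauss map is an exponential, `g(ζ) = c·exp(αζ)` with `α ≠ 0`, `c ≠ 0`. -/
theorem exponential_gauss_map_of_constant_second_chern_ricci
    (U : Set ℂ) (hU : IsOpen U) (hUconn : IsConnected U) (g g' : ℂ → ℂ)
    (hg : ∀ ζ ∈ U, HasDerivAt g (g' ζ) ζ)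
    (hg0 : ∀ ζ ∈ U, g ζ ≠ 0)
    (hg' : ∀ ζ ∈ U, g' ζ ≠ 0)
    (K N : ℂ → ℝ)
    (hK : ∀ ζ, K ζ = -(2 * ‖g' ζ‖ / (1 + ‖g ζ‖ ^ 2)) ^ 4)
    (hN : ∀ ζ, N ζ = (1 - ‖g ζ‖ ^ 2) / (1 + ‖g ζ‖ ^ 2))
    (C : ℝ)
    (hconst : ∀ ζ ∈ U, Real.log ((-K ζ) ^ (-(1 / 2) : ℝ) * (1 - N ζ ^ 2)) = C) :
    ∃ α c : ℂ, α ≠ 0 ∧ c ≠ 0 ∧ ∀ ζ ∈ U, g ζ = c * Complex.exp (α * ζ) := by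
  obtain ⟨ζ₀, hζ₀⟩ := hUconn.nonempty
  set r : ℝ := Real.exp (-(C / 2)) with hrdef
  have hrpos : 0 < r := Real.exp_pos _
  have hgdiff : DifferentiableOn ℂ g U := fun ζ hζ =>
    (hg ζ hζ).differentiableAt.differentiableWithinAt
  have hgan : AnalyticOnNhd ℂ g U := hgdiff.analyticOnNhd hU
  have hderiv : ∀ ζ ∈ U, deriv g ζ = g' ζ := fun ζ hζ => (hg ζ hζ).deriv
  set h : ℂ → ℂ := fun ζ => deriv g ζ / g ζ with hhdef
  have hhan : AnalyticOnNhd ℂ h U := fun ζ hζ =>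
    ((hgan.deriv) ζ hζ).div (hgan ζ hζ) (hg0 ζ hζ)
  -- modulus of h is constant equal to r
  have hmod : ∀ ζ ∈ U, ‖h ζ‖ = r := by
    intro ζ hζ
    have ha : 0 < ‖g ζ‖ := norm_pos_iff.mpr (hg0 ζ hζ)
    have hb : 0 < ‖g' ζ‖ := norm_pos_iff.mpr (hg' ζ hζ)
    set a := ‖g ζ‖ with hadef
    set b := ‖g' ζ‖ with hbdef
    have hden : (0:ℝ) < 1 + a ^ 2 := by positivity
    have ht : (0:ℝ) < 2 * b / (1 + a ^ 2) := by positivity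
    have hKval : (-K ζ) ^ (-(1 / 2) : ℝ) = ((2 * b / (1 + a ^ 2)) ^ 2)⁻¹ := by
      rw [hK, neg_neg, ← Real.rpow_natCast (2 * b / (1 + a ^ 2)) 4,
        ← Real.rpow_mul ht.le]
      norm_num
    have hX : (-K ζ) ^ (-(1 / 2) : ℝ) * (1 - N ζ ^ 2) = a ^ 2 / b ^ 2 := by
      rw [hKval, hN]
      field_simp
      ring
    have hXpos : (0:ℝ) < a ^ 2 / b ^ 2 := by positivity
    have hC := hconst ζ hζ
    rw [hX] at hC
    have hXval : a ^ 2 / b ^ 2 = Real.exp C := by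
      rw [← hC, Real.exp_log hXpos]
    have habs : ‖h ζ‖ = b / a := by
      rw [hhdef]
      simp [map_div₀, hderiv ζ hζ, ← hadef, ← hbdef]
    have h1 : (b / a) ^ 2 = Real.exp (-C) := by
      rw [Real.exp_neg, ← hXval]
      field_simp
    have hsq : r ^ 2 = Real.exp (-C) := by
      rw [hrdef, sq, ← Real.exp_add]
      ring_nf
    rw [habs]
    calc b / a = Real.sqrt ((b / a) ^ 2) := (Real.sqrt_sq (by positivity)).symm
      _ = Real.sqrt (r ^ 2) := by rw [h1, hsq]
      _ = r := Real.sqrt_sq hrpos.le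
  -- open mapping theorem: h is constant
  rcases hhan.is_constant_or_isOpen hUconn.isPreconnected with ⟨w, hw⟩ | hopen
  · have hwabs : ‖w‖ = r := by rw [← hw ζ₀ hζ₀]; exact hmod ζ₀ hζ₀
    have hwne : w ≠ 0 := by
      intro e
      rw [e] at hwabs
      simp at hwabs
      exact hrpos.ne' hwabs.symm
    have hgw : ∀ ζ ∈ U, g' ζ = w * g ζ := by
      intro ζ hζ
      have h1 : deriv g ζ / g ζ = w := hw ζ hζ
      rw [hderiv ζ hζ] at h1
      field_simp [hg0 ζ hζ] at h1
      linear_combination h1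
    have hode : ∀ ζ ∈ U, HasDerivAt (fun z => g z * Complex.exp (-(w * z))) 0 ζ := by
      intro ζ hζ
      have hlin : HasDerivAt (fun z : ℂ => -(w * z)) (-w) ζ := by
        exact ((hasDerivAt_id ζ).const_mul w).neg.congr_deriv (by simp)
      have hexp : HasDerivAt (fun z : ℂ => Complex.exp (-(w * z)))
          (Complex.exp (-(w * ζ)) * -w) ζ :=
        (Complex.hasDerivAt_exp (-(w * ζ))).comp ζ hlin
      have := (hg ζ hζ).mul hexp
      refine this.congr_deriv ?_
      rw [hgw ζ hζ]
      ring
    have hcst := constOn_of_hasDerivAt_zero' hU hUconn.isPreconnected hode hζ₀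
    refine ⟨w, g ζ₀ * Complex.exp (-(w * ζ₀)), hwne,
      mul_ne_zero (hg0 ζ₀ hζ₀) (Complex.exp_ne_zero _), ?_⟩
    intro ζ hζ
    have := hcst ζ hζ
    have hne : Complex.exp (-(w * ζ)) ≠ 0 := Complex.exp_ne_zero _
    field_simp [Complex.exp_ne_zero] at this ⊢
    rw [← this, mul_assoc, ← Complex.exp_add]
    simp
  · exfalso
    have hUopen : IsOpen (h '' U) := hopen U le_rfl hU
    have hsub : h '' U ⊆ Metric.sphere (0:ℂ) r := by
      rintro _ ⟨ζ, hζ, rfl⟩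
      simp [Metric.mem_sphere, Complex.dist_eq, ← Complex.norm_def, hmod ζ hζ]
    have hint : h '' U ⊆ interior (Metric.sphere (0:ℂ) r) :=
      hUopen.subset_interior_iff.mpr hsub
    rw [interior_sphere _ hrpos.ne'] at hint
    exact hint ⟨ζ₀, hζ₀, rfl⟩
end

section
/- Let g : ℂ → ℂ be holomorphic on an open set U with g'(ζ) ≠ 0 for all ζ ∈ U, define the conformal factor λ(ζ) = (1+|g(ζ)|²)/(2|g'(ζ)|), the Gauss curvature K(ζ) = -(2|g'(ζ)|/(1+|g(ζ)|²))⁴, and the angle function N(ζ) = (1-|g(ζ)|²)/(1+|g(ζ)|²). Then Chern's identity holds on U: λ(ζ)^{-2}·Δ ln(1+N(ζ)) = K(ζ), where Δ = ∂²/∂u² + ∂²/∂v² is the flat Laplacian in ζ = u+iv. -/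
open scoped RealInnerProductSpace

lemma chern_key (U : Set ℂ) (hU : IsOpen U) (g g' g'' : ℂ → ℂ)
    (h1 : ∀ z ∈ U, HasDerivAt g (g' z) z) (h2 : ∀ z ∈ U, HasDerivAt g' (g'' z) z)
    (c : ℝ → ℂ) (d : ℂ) (hc : ∀ t, HasDerivAt c d t) (t : ℝ) (ht : c t ∈ U) :
    iteratedDeriv 2 (fun s => Real.log 2 - Real.log (1 + ‖g (c s)‖ ^ 2)) t =
      -(((2 * (⟪g (c t), g'' (c t) * d * d⟫ + ⟪g' (c t) * d, g' (c t) * d⟫))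
          * (1 + ‖g (c t)‖ ^ 2)
        - (2 * ⟪g (c t), g' (c t) * d⟫) * (2 * ⟪g (c t), g' (c t) * d⟫))
        / ((1 + ‖g (c t)‖ ^ 2) ^ 2)) := by
  have hcont : Continuous c := continuous_iff_continuousAt.2 fun t => (hc t).continuousAt
  set f : ℝ → ℝ := fun s => Real.log 2 - Real.log (1 + ‖g (c s)‖ ^ 2) with hfdef
  set D : ℝ → ℝ := fun s => -(2 * ⟪g (c s), g' (c s) * d⟫ / (1 + ‖g (c s)‖ ^ 2)) with hDdef
  have hAne : ∀ s : ℝ, (1 + ‖g (c s)‖ ^ 2) ≠ 0 := by intro s; positivity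
  have hD : ∀ s : ℝ, c s ∈ U → HasDerivAt f (D s) s := by
    intro s hs
    have hG : HasDerivAt (fun s' => g (c s')) (g' (c s) * d) s := (h1 _ hs).comp s (hc s)
    have hA : HasDerivAt (fun s' => 1 + ‖g (c s')‖ ^ 2) (2 * ⟪g (c s), g' (c s) * d⟫) s :=
      hG.norm_sq.const_add 1
    exact (hA.log (hAne s)).const_sub (Real.log 2)
  have hV : IsOpen (c ⁻¹' U) := hU.preimage hcont
  have hmem : ∀ᶠ s in nhds t, c s ∈ U := hV.eventually_mem ht
  have hEq : deriv f =ᶠ[nhds t] D := hmem.mono fun s hs => (hD s hs).deriv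
  rw [iteratedDeriv_succ, iteratedDeriv_one, hEq.deriv_eq]
  have hG : HasDerivAt (fun s' => g (c s')) (g' (c t) * d) t := (h1 _ ht).comp t (hc t)
  have hQ : HasDerivAt (fun s' => g' (c s') * d) (g'' (c t) * d * d) t :=
    ((h2 _ ht).comp t (hc t)).mul_const d
  have hB : HasDerivAt (fun s' => 2 * ⟪g (c s'), g' (c s') * d⟫)
      (2 * (⟪g (c t), g'' (c t) * d * d⟫ + ⟪g' (c t) * d, g' (c t) * d⟫)) t :=
    (hG.inner ℝ hQ).const_mul 2
  have hA : HasDerivAt (fun s' => 1 + ‖g (c s')‖ ^ 2) (2 * ⟪g (c t), g' (c t) * d⟫) t :=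
    hG.norm_sq.const_add 1
  have hDd := ((hB.div hA (hAne t)).neg)
  exact hDd.deriv
open scoped RealInnerProductSpace

lemma chern_log_eq (a : ℝ) (ha : 0 ≤ a) :
    Real.log (1 + (1 - a) / (1 + a)) = Real.log 2 - Real.log (1 + a) := by
  have h1 : (0:ℝ) < 1 + a := by linarith
  have : 1 + (1 - a) / (1 + a) = 2 / (1 + a) := by field_simp; ring
  rw [this, Real.log_div two_ne_zero (ne_of_gt h1)]

/-- **Chern's identity.** With conformal factor `λ = (1+|g|²)/(2|g'|)`, Gauss
curvature `K = -(2|g'|/(1+|g|²))⁴` and angle function `N = (1-|g|²)/(1+|g|²)`, one has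
`λ⁻²·Δ ln(1+N) = K` on `U`, where `Δ = ∂²/∂u² + ∂²/∂v²` is the flat Laplacian in `ζ = u+iv`. -/
theorem chern_identity
    (U : Set ℂ) (hU : IsOpen U) (g g' : ℂ → ℂ)
    (hg : ∀ ζ ∈ U, HasDerivAt g (g' ζ) ζ)
    (hg' : ∀ ζ ∈ U, g' ζ ≠ 0)
    (lam K N : ℂ → ℝ)
    (hlam : ∀ ζ, lam ζ = (1 + ‖g ζ‖ ^ 2) / (2 * ‖g' ζ‖))
    (hK : ∀ ζ, K ζ = -(2 * ‖g' ζ‖ / (1 + ‖g ζ‖ ^ 2)) ^ 4)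
    (hN : ∀ ζ, N ζ = (1 - ‖g ζ‖ ^ 2) / (1 + ‖g ζ‖ ^ 2))
    (F : ℝ → ℝ → ℝ)
    (hF : ∀ u v : ℝ, F u v = Real.log (1 + N (u + v * Complex.I))) :
    ∀ u v : ℝ, (u + v * Complex.I : ℂ) ∈ U →
      (lam (u + v * Complex.I) ^ 2)⁻¹ *
        (iteratedDeriv 2 (fun u' => F u' v) u + iteratedDeriv 2 (fun v' => F u v') v)
      = K (u + v * Complex.I) := by
  -- second derivative of g
  set g'' : ℂ → ℂ := deriv (deriv g) with hg''def
  have hdiff : DifferentiableOn ℂ g U := fun z hz =>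
    ((hg z hz).differentiableAt).differentiableWithinAt
  have han : AnalyticOnNhd ℂ g U := hdiff.analyticOnNhd hU
  have hdan : AnalyticOnNhd ℂ (deriv g) U := han.deriv
  have h2 : ∀ z ∈ U, HasDerivAt g' (g'' z) z := by
    intro z hz
    have h3 : HasDerivAt (deriv g) (g'' z) z := ((hdan z hz).differentiableAt).hasDerivAt
    have heq : g' =ᶠ[nhds z] deriv g :=
      (hU.eventually_mem hz).mono fun w hw => ((hg w hw).deriv).symm
    exact h3.congr_of_eventuallyEq heq
  intro u v hmem
  -- the two coordinate lines
  have hcu : ∀ t : ℝ, HasDerivAt (fun t : ℝ => (t : ℂ) + v * Complex.I) 1 t := by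
    intro t
    have h := Complex.ofRealCLM.hasDerivAt (x := t)
    simpa using h.add_const ((v : ℂ) * Complex.I)
  have hcv : ∀ t : ℝ, HasDerivAt (fun t : ℝ => (u : ℂ) + t * Complex.I) Complex.I t := by
    intro t
    have h := (Complex.ofRealCLM.hasDerivAt (x := t)).mul_const Complex.I
    simpa using h.const_add (u : ℂ)
  -- rewrite F as log 2 - log(1+‖g‖²)
  have hFu : (fun u' => F u' v)
      = fun s : ℝ => Real.log 2 - Real.log (1 + ‖g ((s : ℂ) + v * Complex.I)‖ ^ 2) := by
    funext s
    rw [hF, hN]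
    exact chern_log_eq _ (by positivity)
  have hFv : (fun v' => F u v')
      = fun s : ℝ => Real.log 2 - Real.log (1 + ‖g ((u : ℂ) + s * Complex.I)‖ ^ 2) := by
    funext s
    rw [hF, hN]
    exact chern_log_eq _ (by positivity)
  rw [hFu, hFv]
  rw [chern_key U hU g g' g'' hg h2 _ 1 hcu u hmem,
      chern_key U hU g g' g'' hg h2 _ Complex.I hcv v hmem]
  set ζ : ℂ := (u : ℂ) + v * Complex.I
  set P : ℂ := g ζ
  set Q : ℂ := g' ζ
  set R : ℂ := g'' ζ
  have hQne : Q ≠ 0 := hg' ζ hmem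
  have haq : ‖Q‖ ^ 2 = Q.re ^ 2 + Q.im ^ 2 := by
    rw [Complex.sq_norm, Complex.normSq_apply]; ring
  have hap : ‖P‖ ^ 2 = P.re ^ 2 + P.im ^ 2 := by
    rw [Complex.sq_norm, Complex.normSq_apply]; ring
  have hApos : (0:ℝ) < 1 + (P.re ^ 2 + P.im ^ 2) := by positivity
  have haqne : ‖Q‖ ≠ 0 := by simpa using hQne
  have hnq : (0:ℝ) < Q.re ^ 2 + Q.im ^ 2 := by
    have := haq ▸ (pow_pos (norm_pos_iff.mpr hQne) 2); linarith
  rw [hlam, hK]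
  rw [show (2 * ‖Q‖ / (1 + ‖P‖ ^ 2)) ^ 4
        = 16 * (Q.re ^ 2 + Q.im ^ 2) ^ 2 / (1 + (P.re ^ 2 + P.im ^ 2)) ^ 4 by
      rw [div_pow, hap, show (2 * ‖Q‖) ^ 4 = 16 * (‖Q‖ ^ 2) ^ 2 by ring, haq]]
  rw [show (((1 + ‖P‖ ^ 2) / (2 * ‖Q‖)) ^ 2)⁻¹
        = 4 * (Q.re ^ 2 + Q.im ^ 2) / (1 + (P.re ^ 2 + P.im ^ 2)) ^ 2 by
      rw [div_pow, inv_div, hap, show (2 * ‖Q‖) ^ 2 = 4 * (‖Q‖ ^ 2) by ring,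
        haq]]
  simp only [Complex.inner, hap, map_mul, Complex.mul_re, Complex.mul_im,
    Complex.conj_re, Complex.conj_im, Complex.I_re, Complex.I_im, Complex.one_re, Complex.one_im,
    mul_one, mul_zero, zero_mul, sub_zero, zero_sub, add_zero, zero_add, mul_neg, neg_neg,
    neg_mul]
  field_simp
  ring
end

section
/- Let g : ℂ → ℂ be holomorphic on an open set U with g'(ζ) ≠ 0 for all ζ ∈ U, define the conformal factor λ(ζ) = (1+|g(ζ)|²)/(2|g'(ζ)|) and the Gauss curvature K(ζ) = -(2|g'(ζ)|/(1+|g(ζ)|²))⁴. Then Ricci's identity holds on U: λ(ζ)^{-2}·Δ ln(-K(ζ)) = 4K(ζ), where Δ = ∂²/∂u² + ∂²/∂v² is the flat Laplacian in ζ = u+iv. -/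
open Complex Filter

private lemma itder2 {F Φ D : ℝ → ℝ} {s : Set ℝ} (hs : IsOpen s) {t0 : ℝ} (ht0 : t0 ∈ s)
    (hFΦ : ∀ t ∈ s, F t = Φ t) (hΦ : ∀ t ∈ s, HasDerivAt Φ (D t) t)
    {val : ℝ} (hD : HasDerivAt D val t0) : iteratedDeriv 2 F t0 = val := by
  have hmem : ∀ t ∈ s, deriv F t = D t := by
    intro t ht
    have h1 : F =ᶠ[nhds t] Φ := Filter.eventually_of_mem (hs.mem_nhds ht) hFΦ
    rw [h1.deriv_eq, (hΦ t ht).deriv]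
  have h2 : deriv F =ᶠ[nhds t0] D := Filter.eventually_of_mem (hs.mem_nhds ht0) hmem
  rw [show (2:ℕ) = 1+1 from rfl, iteratedDeriv_succ, iteratedDeriv_one, h2.deriv_eq, hD.deriv]

private lemma hasDerivAt_normSq' {f : ℝ → ℂ} {a : ℂ} {t : ℝ} (hf : HasDerivAt f a t) :
    HasDerivAt (fun t => Complex.normSq (f t)) (2 * ((starRingEnd ℂ) (f t) * a).re) t := by
  have hre : HasDerivAt (fun t => (f t).re) a.re t :=
    Complex.reCLM.hasFDerivAt.comp_hasDerivAt t hf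
  have him : HasDerivAt (fun t => (f t).im) a.im t :=
    Complex.imCLM.hasFDerivAt.comp_hasDerivAt t hf
  have h := (hre.mul hre).add (him.mul him)
  simp only [Complex.normSq_apply]
  refine h.congr_deriv ?_
  simp only [Complex.mul_re, Complex.conj_re, Complex.conj_im]
  ring

private lemma core {f f' f'' : ℝ → ℂ} {c : ℝ} {s : Set ℝ} (hs : IsOpen s)
    (hf : ∀ t ∈ s, HasDerivAt f (f' t) t)
    (hf' : ∀ t ∈ s, HasDerivAt f' (f'' t) t)
    (hne : ∀ t ∈ s, c + Complex.normSq (f t) ≠ 0) :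
    (∀ t ∈ s, HasDerivAt (fun t => Real.log (c + Complex.normSq (f t)))
        (2 * ((starRingEnd ℂ) (f t) * f' t).re / (c + Complex.normSq (f t))) t) ∧
    (∀ t0 ∈ s, HasDerivAt
        (fun t => 2 * ((starRingEnd ℂ) (f t) * f' t).re / (c + Complex.normSq (f t)))
        ((2 * (((starRingEnd ℂ) (f' t0) * f' t0).re + ((starRingEnd ℂ) (f t0) * f'' t0).re)
            * (c + Complex.normSq (f t0))
          - 2 * ((starRingEnd ℂ) (f t0) * f' t0).re
            * (2 * ((starRingEnd ℂ) (f t0) * f' t0).re))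
          / (c + Complex.normSq (f t0)) ^ 2) t0) := by
  have hden : ∀ t ∈ s, HasDerivAt (fun t => c + Complex.normSq (f t))
      (2 * ((starRingEnd ℂ) (f t) * f' t).re) t := by
    intro t ht
    exact (hasDerivAt_normSq' (hf t ht)).const_add c
  have hnum : ∀ t ∈ s, HasDerivAt (fun t => 2 * ((starRingEnd ℂ) (f t) * f' t).re)
      (2 * (((starRingEnd ℂ) (f' t) * f' t).re + ((starRingEnd ℂ) (f t) * f'' t).re)) t := by
    intro t ht
    have hconj : HasDerivAt (fun t => (starRingEnd ℂ) (f t)) ((starRingEnd ℂ) (f' t)) t := by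
      simpa using (hf t ht).star
    have hmul := hconj.mul (hf' t ht)
    have hre : HasDerivAt (fun t => ((starRingEnd ℂ) (f t) * f' t).re)
        (((starRingEnd ℂ) (f' t) * f' t) + ((starRingEnd ℂ) (f t) * f'' t)).re t :=
      Complex.reCLM.hasFDerivAt.comp_hasDerivAt t hmul
    simpa [Complex.add_re] using hre.const_mul (2:ℝ)
  constructor
  · intro t ht
    have := (Real.hasDerivAt_log (hne t ht)).comp t (hden t ht)
    refine this.congr_deriv ?_
    ring
  · intro t0 ht0
    exact (hnum t0 ht0).div (hden t0 ht0) (hne t0 ht0)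

private lemma compU {h : ℂ → ℂ} {d : ℂ} {v t : ℝ} (hh : HasDerivAt h d ((t:ℂ) + v * Complex.I)) :
    HasDerivAt (fun u : ℝ => h ((u:ℂ) + v * Complex.I)) d t := by
  have hL : HasDerivAt (fun u : ℝ => (u:ℂ) + v * Complex.I) 1 t := by
    simpa using (Complex.ofRealCLM.hasDerivAt (x := t)).add_const ((v:ℂ) * Complex.I)
  simpa [Function.comp_def] using HasDerivAt.scomp t hh hL

private lemma compV {h : ℂ → ℂ} {d : ℂ} {u t : ℝ} (hh : HasDerivAt h d ((u:ℂ) + t * Complex.I)) :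
    HasDerivAt (fun v : ℝ => h ((u:ℂ) + v * Complex.I)) (d * Complex.I) t := by
  have hL : HasDerivAt (fun v : ℝ => (u:ℂ) + (v:ℂ) * Complex.I) Complex.I t := by
    simpa using ((Complex.ofRealCLM.hasDerivAt (x := t)).mul_const Complex.I).const_add (u:ℂ)
  have := HasDerivAt.scomp t hh hL
  simpa [Function.comp_def, mul_comm, smul_eq_mul] using this

private lemma logK (z' zg : ℂ) (hz' : z' ≠ 0) :
    Real.log ((2 * ‖z'‖ / (1 + ‖zg‖ ^ 2)) ^ 4)
      = 4 * Real.log 2 + (2 * Real.log (0 + Complex.normSq z')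
          - 4 * Real.log (1 + Complex.normSq zg)) := by
  have h1 : (0:ℝ) < ‖z'‖ := norm_pos_iff.mpr hz'
  have hb : (0:ℝ) < 1 + ‖zg‖ ^ 2 := by positivity
  rw [Real.log_pow, Real.log_div (by positivity) hb.ne', Real.log_mul two_ne_zero h1.ne',
    zero_add, show Complex.normSq z' = ‖z'‖ ^ 2 from (Complex.sq_norm z').symm,
    Real.log_pow, show Complex.normSq zg = ‖zg‖ ^ 2 from (Complex.sq_norm zg).symm]
  push_cast
  ring

/-- **Ricci's identity.** With conformal factor `λ = (1+|g|²)/(2|g'|)` and Gauss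
curvature `K = -(2|g'|/(1+|g|²))⁴`, one has `λ⁻²·Δ ln(-K) = 4K` on `U`, where
`Δ = ∂²/∂u² + ∂²/∂v²` is the flat Laplacian in `ζ = u+iv`. -/
theorem ricci_identity
    (U : Set ℂ) (hU : IsOpen U) (g g' : ℂ → ℂ)
    (hg : ∀ ζ ∈ U, HasDerivAt g (g' ζ) ζ)
    (hg' : ∀ ζ ∈ U, g' ζ ≠ 0)
    (lam K : ℂ → ℝ)
    (hlam : ∀ ζ, lam ζ = (1 + ‖g ζ‖ ^ 2) / (2 * ‖g' ζ‖))
    (hK : ∀ ζ, K ζ = -(2 * ‖g' ζ‖ / (1 + ‖g ζ‖ ^ 2)) ^ 4)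
    (F : ℝ → ℝ → ℝ)
    (hF : ∀ u v : ℝ, F u v = Real.log (-K (u + v * Complex.I))) :
    ∀ u v : ℝ, (u + v * Complex.I : ℂ) ∈ U →
      (lam (u + v * Complex.I) ^ 2)⁻¹ *
        (iteratedDeriv 2 (fun u' => F u' v) u + iteratedDeriv 2 (fun v' => F u v') v)
      = 4 * K (u + v * Complex.I) := by
  intro u v huv
  -- analyticity and higher derivatives
  have hgd : DifferentiableOn ℂ g U := fun z hz => (hg z hz).differentiableAt.differentiableWithinAt
  have hA : AnalyticOnNhd ℂ g U := hgd.analyticOnNhd hU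
  have hA1 : AnalyticOnNhd ℂ (deriv g) U := hA.deriv
  have hA2 : AnalyticOnNhd ℂ (deriv (deriv g)) U := hA1.deriv
  set G2 : ℂ → ℂ := deriv (deriv g) with hG2def
  set G3 : ℂ → ℂ := deriv G2 with hG3def
  have hg'' : ∀ z ∈ U, HasDerivAt g' (G2 z) z := by
    intro z hz
    have h1 : HasDerivAt (deriv g) (G2 z) z := (hA1 z hz).differentiableAt.hasDerivAt
    have heq : g' =ᶠ[nhds z] deriv g :=
      Filter.eventually_of_mem (hU.mem_nhds hz) (fun x hx => ((hg x hx).deriv).symm)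
    exact h1.congr_of_eventuallyEq heq
  have hg''' : ∀ z ∈ U, HasDerivAt G2 (G3 z) z := fun z hz =>
    (hA2 z hz).differentiableAt.hasDerivAt
  -- horizontal line
  set su : Set ℝ := {t : ℝ | ((t:ℂ) + v * Complex.I) ∈ U} with hsudef
  have hsu : IsOpen su := hU.preimage (by continuity)
  have hu : u ∈ su := huv
  set sv : Set ℝ := {t : ℝ | ((u:ℂ) + t * Complex.I) ∈ U} with hsvdef
  have hsv : IsOpen sv := hU.preimage (by continuity)
  have hv : v ∈ sv := huv
  -- nonvanishing facts
  have hneB : ∀ z : ℂ, (1:ℝ) + Complex.normSq (g z) ≠ 0 := by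
    intro z
    have := Complex.normSq_nonneg (g z)
    intro h; linarith
  have hneM : ∀ z ∈ U, (0:ℝ) + Complex.normSq (g' z) ≠ 0 := by
    intro z hz
    simpa [Complex.normSq_eq_zero] using hg' z hz
  -- u-direction B part
  obtain ⟨hBu1, hBu2⟩ := core (f := fun t => g ((t:ℂ) + v * Complex.I))
    (f' := fun t => g' ((t:ℂ) + v * Complex.I)) (f'' := fun t => G2 ((t:ℂ) + v * Complex.I))
    (c := 1) hsu (fun t ht => compU (hg _ ht)) (fun t ht => compU (hg'' _ ht))
    (fun t ht => hneB _)
  obtain ⟨hMu1, hMu2⟩ := core (f := fun t => g' ((t:ℂ) + v * Complex.I))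
    (f' := fun t => G2 ((t:ℂ) + v * Complex.I)) (f'' := fun t => G3 ((t:ℂ) + v * Complex.I))
    (c := 0) hsu (fun t ht => compU (hg'' _ ht)) (fun t ht => compU (hg''' _ ht))
    (fun t ht => hneM _ ht)
  obtain ⟨hBv1, hBv2⟩ := core (f := fun t => g ((u:ℂ) + t * Complex.I))
    (f' := fun t => g' ((u:ℂ) + t * Complex.I) * Complex.I)
    (f'' := fun t => G2 ((u:ℂ) + t * Complex.I) * Complex.I * Complex.I)
    (c := 1) hsv (fun t ht => compV (hg _ ht))
    (fun t ht => (compV (hg'' _ ht)).mul_const Complex.I)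
    (fun t ht => hneB _)
  obtain ⟨hMv1, hMv2⟩ := core (f := fun t => g' ((u:ℂ) + t * Complex.I))
    (f' := fun t => G2 ((u:ℂ) + t * Complex.I) * Complex.I)
    (f'' := fun t => G3 ((u:ℂ) + t * Complex.I) * Complex.I * Complex.I)
    (c := 0) hsv (fun t ht => compV (hg'' _ ht))
    (fun t ht => (compV (hg''' _ ht)).mul_const Complex.I)
    (fun t ht => hneM _ ht)
  -- identify F along the lines
  have hFu : ∀ t ∈ su, F t v = 4 * Real.log 2 +
      (2 * Real.log (0 + Complex.normSq (g' ((t:ℂ) + v * Complex.I)))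
        - 4 * Real.log (1 + Complex.normSq (g ((t:ℂ) + v * Complex.I)))) := by
    intro t ht
    rw [hF, hK, neg_neg]
    exact logK _ _ (hg' _ ht)
  have hFv : ∀ t ∈ sv, F u t = 4 * Real.log 2 +
      (2 * Real.log (0 + Complex.normSq (g' ((u:ℂ) + t * Complex.I)))
        - 4 * Real.log (1 + Complex.normSq (g ((u:ℂ) + t * Complex.I)))) := by
    intro t ht
    rw [hF, hK, neg_neg]
    exact logK _ _ (hg' _ ht)
  -- second derivative in u
  have keyU : iteratedDeriv 2 (fun u' => F u' v) u =
      2 * ((2 * (((starRingEnd ℂ) (G2 ((u:ℂ) + v * Complex.I)) * G2 ((u:ℂ) + v * Complex.I)).re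
              + ((starRingEnd ℂ) (g' ((u:ℂ) + v * Complex.I)) * G3 ((u:ℂ) + v * Complex.I)).re)
            * (0 + Complex.normSq (g' ((u:ℂ) + v * Complex.I)))
          - 2 * ((starRingEnd ℂ) (g' ((u:ℂ) + v * Complex.I)) * G2 ((u:ℂ) + v * Complex.I)).re
            * (2 * ((starRingEnd ℂ) (g' ((u:ℂ) + v * Complex.I)) * G2 ((u:ℂ) + v * Complex.I)).re))
          / (0 + Complex.normSq (g' ((u:ℂ) + v * Complex.I))) ^ 2)
      - 4 * ((2 * (((starRingEnd ℂ) (g' ((u:ℂ) + v * Complex.I)) * g' ((u:ℂ) + v * Complex.I)).re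
              + ((starRingEnd ℂ) (g ((u:ℂ) + v * Complex.I)) * G2 ((u:ℂ) + v * Complex.I)).re)
            * (1 + Complex.normSq (g ((u:ℂ) + v * Complex.I)))
          - 2 * ((starRingEnd ℂ) (g ((u:ℂ) + v * Complex.I)) * g' ((u:ℂ) + v * Complex.I)).re
            * (2 * ((starRingEnd ℂ) (g ((u:ℂ) + v * Complex.I)) * g' ((u:ℂ) + v * Complex.I)).re))
          / (1 + Complex.normSq (g ((u:ℂ) + v * Complex.I))) ^ 2) := by
    refine itder2 hsu hu hFu
      (fun t ht => (((hMu1 t ht).const_mul 2).sub ((hBu1 t ht).const_mul 4)).const_add _)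
      (((hMu2 u hu).const_mul 2).sub ((hBu2 u hu).const_mul 4))
  have keyV : iteratedDeriv 2 (fun v' => F u v') v =
      2 * ((2 * (((starRingEnd ℂ) (G2 ((u:ℂ) + v * Complex.I) * Complex.I)
                * (G2 ((u:ℂ) + v * Complex.I) * Complex.I)).re
              + ((starRingEnd ℂ) (g' ((u:ℂ) + v * Complex.I))
                * (G3 ((u:ℂ) + v * Complex.I) * Complex.I * Complex.I)).re)
            * (0 + Complex.normSq (g' ((u:ℂ) + v * Complex.I)))
          - 2 * ((starRingEnd ℂ) (g' ((u:ℂ) + v * Complex.I))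
              * (G2 ((u:ℂ) + v * Complex.I) * Complex.I)).re
            * (2 * ((starRingEnd ℂ) (g' ((u:ℂ) + v * Complex.I))
              * (G2 ((u:ℂ) + v * Complex.I) * Complex.I)).re))
          / (0 + Complex.normSq (g' ((u:ℂ) + v * Complex.I))) ^ 2)
      - 4 * ((2 * (((starRingEnd ℂ) (g' ((u:ℂ) + v * Complex.I) * Complex.I)
                * (g' ((u:ℂ) + v * Complex.I) * Complex.I)).re
              + ((starRingEnd ℂ) (g ((u:ℂ) + v * Complex.I))
                * (G2 ((u:ℂ) + v * Complex.I) * Complex.I * Complex.I)).re)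
            * (1 + Complex.normSq (g ((u:ℂ) + v * Complex.I)))
          - 2 * ((starRingEnd ℂ) (g ((u:ℂ) + v * Complex.I))
              * (g' ((u:ℂ) + v * Complex.I) * Complex.I)).re
            * (2 * ((starRingEnd ℂ) (g ((u:ℂ) + v * Complex.I))
              * (g' ((u:ℂ) + v * Complex.I) * Complex.I)).re))
          / (1 + Complex.normSq (g ((u:ℂ) + v * Complex.I))) ^ 2) := by
    refine itder2 hsv hv hFv
      (fun t ht => (((hMv1 t ht).const_mul 2).sub ((hBv1 t ht).const_mul 4)).const_add _)
      (((hMv2 v hv).const_mul 2).sub ((hBv2 v hv).const_mul 4))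
  rw [keyU, keyV, hlam, hK]
  -- final algebra
  set A : ℂ := g ((u:ℂ) + v * Complex.I)
  set B : ℂ := g' ((u:ℂ) + v * Complex.I)
  set C : ℂ := G2 ((u:ℂ) + v * Complex.I)
  set D : ℂ := G3 ((u:ℂ) + v * Complex.I)
  have hBne : B ≠ 0 := hg' _ huv
  have ha : Complex.normSq B ≠ 0 := by simpa [Complex.normSq_eq_zero] using hBne
  have ha' : (0:ℝ) < Complex.normSq B := lt_of_le_of_ne (Complex.normSq_nonneg B) (Ne.symm ha)
  have hb' : (0:ℝ) < 1 + Complex.normSq A := by linarith [Complex.normSq_nonneg A]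
  have habs : ‖B‖ ≠ 0 := norm_ne_zero_iff.mpr hBne
  have hsqB : ‖B‖ ^ 2 = Complex.normSq B := Complex.sq_norm B
  have hsqA : ‖A‖ ^ 2 = Complex.normSq A := Complex.sq_norm A
  rw [hsqA]
  have habs4 : (2 * ‖B‖ / (1 + Complex.normSq A)) ^ 4
      = (4 * Complex.normSq B) ^ 2 / ((1 + Complex.normSq A) ^ 2) ^ 2 := by
    rw [div_pow, ← pow_mul]
    norm_num
    rw [show (2 * ‖B‖) ^ 4 = ((2 * ‖B‖) ^ 2) ^ 2 by ring, mul_pow, hsqB]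
    ring_nf
  have hlamsq : ((1 + Complex.normSq A) / (2 * ‖B‖)) ^ 2
      = (1 + Complex.normSq A) ^ 2 / (4 * Complex.normSq B) := by
    rw [div_pow, mul_pow, hsqB]; norm_num
  rw [habs4, hlamsq]
  simp only [Complex.normSq_apply, Complex.mul_re, Complex.mul_im, Complex.conj_re,
    Complex.conj_im, Complex.I_re, Complex.I_im]
  have ha2 : B.re * B.re + B.im * B.im ≠ 0 := by
    simpa [Complex.normSq_apply] using ha
  have hb2 : 1 + (A.re * A.re + A.im * A.im) ≠ 0 := by
    simpa [Complex.normSq_apply] using hb'.ne'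
  field_simp
  ring
end

section
/- Let X : ℝ × ℝ → ℝ³ be Enneper's patch X(u,v) = (½(u - u³/3 + uv²), ½(-v + v³/3 - u²v), ½(u² - v²)), let N(u,v) = (X_u × X_v)/‖X_u × X_v‖ be its unit normal, and let K(u,v) = -(2/(1+u²+v²))⁴ be its Gauss curvature. Then for all (u,v), the quantity (-K(u,v))^{-1/4}·(1 + ⟨N(u,v), (0,0,-1)⟩) equals 1; that is, the first Chern–Ricci function of Enneper's surface with respect to V = -e₃ is identically 0. -/
/-- Enneper's patch `X(u,v) = (½(u - u³/3 + uv²), ½(-v + v³/3 - u²v), ½(u² - v²))`. -/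
noncomputable def enneperPatch (u v : ℝ) : EuclideanSpace ℝ (Fin 3) :=
  WithLp.toLp 2 ![(1 / 2) * (u - u ^ 3 / 3 + u * v ^ 2),
    (1 / 2) * (-v + v ^ 3 / 3 - u ^ 2 * v),
    (1 / 2) * (u ^ 2 - v ^ 2)]

/-- The cross product of two vectors in `ℝ³`. -/
noncomputable def cross3 (a b : EuclideanSpace ℝ (Fin 3)) : EuclideanSpace ℝ (Fin 3) :=
  WithLp.toLp 2 ![a 1 * b 2 - a 2 * b 1, a 2 * b 0 - a 0 * b 2, a 0 * b 1 - a 1 * b 0]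

/-- The unit normal of Enneper's patch, `N = (X_u × X_v)/‖X_u × X_v‖`. -/
noncomputable def enneperNormal (u v : ℝ) : EuclideanSpace ℝ (Fin 3) :=
  ‖cross3 (deriv (fun u' => enneperPatch u' v) u) (deriv (fun v' => enneperPatch u v') v)‖⁻¹ •
    cross3 (deriv (fun u' => enneperPatch u' v) u) (deriv (fun v' => enneperPatch u v') v)

lemma enneper_deriv_u (u v : ℝ) :
    deriv (fun u' => enneperPatch u' v) u
      = (WithLp.toLp 2 (![(1/2) * (1 - u^2 + v^2), -(u*v), u] : Fin 3 → ℝ) : EuclideanSpace ℝ (Fin 3)) := by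
  have h : HasDerivAt (fun u' => (fun i => enneperPatch u' v i : Fin 3 → ℝ))
      (![(1/2) * (1 - u^2 + v^2), -(u*v), u]) u := by
    rw [hasDerivAt_pi]
    intro i
    fin_cases i <;> simp [enneperPatch]
    · have h1 : HasDerivAt (fun u' : ℝ => 2⁻¹ * (u' - u'^3/3 + u'*v^2))
          (2⁻¹ * ((1 - 3*u^(3-1)/3) + 1*v^2)) u :=
        (((hasDerivAt_id u).sub ((hasDerivAt_pow 3 u).div_const 3)).add
          ((hasDerivAt_id u).mul_const (v^2))).const_mul 2⁻¹
      convert h1 using 1; rfl; rfl; norm_num; try ring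
    · have h1 : HasDerivAt (fun u' : ℝ => 2⁻¹ * (-v + v^3/3 - u'^2*v))
          (2⁻¹ * (0 - (2*u^(2-1))*v)) u :=
        ((hasDerivAt_const u (-v + v^3/3)).sub
          ((hasDerivAt_pow 2 u).mul_const v)).const_mul 2⁻¹
      convert h1 using 1; rfl; rfl; norm_num; try ring
    · have h1 : HasDerivAt (fun u' : ℝ => 2⁻¹ * (u'^2 - v^2))
          (2⁻¹ * (2*u^(2-1) - 0)) u :=
        ((hasDerivAt_pow 2 u).sub (hasDerivAt_const u (v^2))).const_mul 2⁻¹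
      convert h1 using 1; rfl; rfl; norm_num; try ring
  exact ((PiLp.continuousLinearEquiv 2 ℝ (fun _ : Fin 3 => ℝ)).symm.hasFDerivAt.comp_hasDerivAt
    u h).deriv

lemma enneper_deriv_v (u v : ℝ) :
    deriv (fun v' => enneperPatch u v') v
      = (WithLp.toLp 2 (![u*v, (1/2) * (-1 + v^2 - u^2), -v] : Fin 3 → ℝ) : EuclideanSpace ℝ (Fin 3)) := by
  have h : HasDerivAt (fun v' => (fun i => enneperPatch u v' i : Fin 3 → ℝ))
      (![u*v, (1/2) * (-1 + v^2 - u^2), -v]) v := by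
    rw [hasDerivAt_pi]
    intro i
    fin_cases i <;> simp [enneperPatch]
    · have h1 : HasDerivAt (fun v' : ℝ => 2⁻¹ * (u - u^3/3 + u*v'^2))
          (2⁻¹ * (0 + u * (2*v^(2-1)))) v :=
        ((hasDerivAt_const v (u - u^3/3)).add
          ((hasDerivAt_pow 2 v).const_mul u)).const_mul 2⁻¹
      convert h1 using 1; rfl; rfl; norm_num; try ring
    · have h1 : HasDerivAt (fun v' : ℝ => 2⁻¹ * (-v' + v'^3/3 - u^2*v'))
          (2⁻¹ * ((-1 + 3*v^(3-1)/3) - u^2*1)) v :=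
        (((hasDerivAt_id v).neg.add ((hasDerivAt_pow 3 v).div_const 3)).sub
          ((hasDerivAt_id v).const_mul (u^2))).const_mul 2⁻¹
      convert h1 using 1; rfl; rfl; norm_num; try ring
    · have h1 : HasDerivAt (fun v' : ℝ => 2⁻¹ * (u^2 - v'^2))
          (2⁻¹ * (0 - 2*v^(2-1))) v :=
        ((hasDerivAt_const v (u^2)).sub (hasDerivAt_pow 2 v)).const_mul 2⁻¹
      convert h1 using 1; rfl; rfl; norm_num; try ring
  exact ((PiLp.continuousLinearEquiv 2 ℝ (fun _ : Fin 3 => ℝ)).symm.hasFDerivAt.comp_hasDerivAt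
    v h).deriv

/-- For Enneper's surface, with Gauss curvature `K = -(2/(1+u²+v²))⁴` and unit
normal `N`, the quantity `(-K)^(-1/4)·(1 + ⟨N, -e₃⟩)` is identically `1`; i.e. the first
Chern–Ricci function of Enneper's surface with respect to `V = -e₃` is identically `0`. -/
theorem enneper_first_chern_ricci_constant
    (K : ℝ → ℝ → ℝ) (hK : ∀ u v : ℝ, K u v = -(2 / (1 + u ^ 2 + v ^ 2)) ^ 4) :
    ∀ u v : ℝ,
      (-K u v) ^ (-(1 / 4) : ℝ) *
        (1 + (inner ℝ (enneperNormal u v) (WithLp.toLp 2 ![0, 0, -1] : EuclideanSpace ℝ (Fin 3)) : ℝ)) = 1 := by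
  intro u v
  have hspos : (0:ℝ) < 1 + u^2 + v^2 := by positivity
  have hc : cross3 (deriv (fun u' => enneperPatch u' v) u) (deriv (fun v' => enneperPatch u v') v)
      = (WithLp.toLp 2 (![u*(1+u^2+v^2)/2, v*(1+u^2+v^2)/2, (u^2+v^2-1)*(1+u^2+v^2)/4] : Fin 3 → ℝ) :
          EuclideanSpace ℝ (Fin 3)) := by
    rw [enneper_deriv_u, enneper_deriv_v]
    ext i
    fin_cases i <;> simp [cross3] <;> ring
  have hnorm : ‖cross3 (deriv (fun u' => enneperPatch u' v) u)
      (deriv (fun v' => enneperPatch u v') v)‖ = (1+u^2+v^2)^2/4 := by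
    rw [hc, EuclideanSpace.norm_eq]
    rw [show ∑ i : Fin 3, ‖(WithLp.toLp 2 (![u*(1+u^2+v^2)/2, v*(1+u^2+v^2)/2,
        (u^2+v^2-1)*(1+u^2+v^2)/4] : Fin 3 → ℝ) : EuclideanSpace ℝ (Fin 3)) i‖^2 = ((1+u^2+v^2)^2/4)^2 by
      simp [Fin.sum_univ_three, sq_abs]; ring]
    exact Real.sqrt_sq (by positivity)
  have hinner : (inner ℝ (cross3 (deriv (fun u' => enneperPatch u' v) u)
      (deriv (fun v' => enneperPatch u v') v)) (WithLp.toLp 2 ![0,0,-1] : EuclideanSpace ℝ (Fin 3)) : ℝ)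
      = -((u^2+v^2-1)*(1+u^2+v^2)/4) := by
    rw [hc]
    simp [PiLp.inner_apply, RCLike.inner_apply, Fin.sum_univ_three]
  have hN : (inner ℝ (enneperNormal u v) (WithLp.toLp 2 ![0,0,-1] : EuclideanSpace ℝ (Fin 3)) : ℝ)
      = ((1+u^2+v^2)^2/4)⁻¹ * -((u^2+v^2-1)*(1+u^2+v^2)/4) := by
    rw [enneperNormal, real_inner_smul_left, hnorm, hinner]
  rw [hN, hK]
  have h2s : (0:ℝ) < 2/(1+u^2+v^2) := by positivity
  have hr : (-(-(2 / (1 + u ^ 2 + v ^ 2)) ^ 4)) ^ (-(1/4) : ℝ) = (1+u^2+v^2)/2 := by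
    rw [neg_neg, ← Real.rpow_natCast (2/(1+u^2+v^2)) 4, ← Real.rpow_mul h2s.le]
    norm_num
    rw [Real.rpow_neg_one, inv_div]
  rw [hr]
  field_simp
  ring
end
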